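/- If every R-module possesses a quasi-projective cover, then every R-module possesses a projective cover (i.e., R is semiperfect when R has enough projectives, which module categories always do). -/

import Mathlib

open CategoryTheory

universe u
variable {R : Type u} [Ring R]

/-- A module `Q` is quasi-projective if every homomorphism from `Q` to a quotient
of `Q` lifts to an endomorphism of `Q`. -/
def QuasiProjective (Q : ModuleCat.{u} R) : Prop :=
  ∀ (B : ModuleCat.{u} R) (g : Q ⟶ B), Function.Surjective g →
    ∀ f : Q ⟶ B, ∃ h : Q ⟶ Q, h ≫ g = f

/-- An epimorphism `f : B → C` is essential if for every `g : X → B`,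
surjectivity of `f ∘ g` implies surjectivity of `g`. -/
def EssentialEpi {B C : ModuleCat.{u} R} (f : B ⟶ C) : Prop :=
  ∀ (X : ModuleCat.{u} R) (g : X ⟶ B), Function.Surjective (g ≫ f) → Function.Surjective g

/-- If every module possesses a quasi-projective cover, then every module possesses
a projective cover. -/
theorem projective_covers_of_quasiProjective_covers
    (h : ∀ A : ModuleCat.{u} R, ∃ (Q : ModuleCat.{u} R) (f : Q ⟶ A),
      QuasiProjective Q ∧ Function.Surjective f ∧ EssentialEpi f) :
    ∀ A : ModuleCat.{u} R, ∃ (P : ModuleCat.{u} R) (f : P ⟶ A),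
      Module.Projective R P ∧ Function.Surjective f ∧ EssentialEpi f := by
  intro A
  -- free module F surjecting onto A
  set F : Type u := (A →₀ R) with hF
  let π : F →ₗ[R] A := Finsupp.linearCombination R id
  have hπ : Function.Surjective π := Finsupp.linearCombination_id_surjective R A
  -- quasi-projective cover of F × A
  obtain ⟨Q, e, hQqp, hesurj, hess⟩ := h (ModuleCat.of R (F × A))
  let E : Q →ₗ[R] F × A := e.hom
  let p₁ : (F × A) →ₗ[R] F := LinearMap.fst R F A
  let p₂ : (F × A) →ₗ[R] A := LinearMap.snd R F A
  -- lift inl : F → F × A through E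
  obtain ⟨s, hs⟩ := Module.projective_lifting_property E (LinearMap.inl R F A) hesurj
  have hs' : ∀ x : F, E (s x) = (x, (0 : A)) := fun x => DFunLike.congr_fun hs x
  -- N = ker (p₁ ∘ E)
  let K : Submodule R Q := LinearMap.ker (p₁ ∘ₗ E)
  let f : K →ₗ[R] A := (p₂ ∘ₗ E) ∘ₗ K.subtype
  -- retraction ρ : Q → K
  have hρmem : ∀ q : Q, q - s (p₁ (E q)) ∈ K := by
    intro q
    have : p₁ (E (q - s (p₁ (E q)))) = 0 := by
      rw [map_sub, map_sub, hs']; simp [p₁]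
    exact this
  let ρ : Q →ₗ[R] K := LinearMap.codRestrict K
    (LinearMap.id - s ∘ₗ (p₁ ∘ₗ E)) (by intro q; exact hρmem q)
  have hρ : ∀ q : Q, (ρ q : Q) = q - s (p₁ (E q)) := fun q => rfl
  have hρK : ∀ n : K, ρ (n : Q) = n := by
    intro n
    ext
    rw [hρ]
    have : p₁ (E (n : Q)) = 0 := n.2
    rw [this, map_zero, sub_zero]
  -- f is surjective
  have hfsurj : Function.Surjective f := by
    intro a
    obtain ⟨q, hq⟩ := hesurj ((0 : F), a)
    have hq' : E q = (0, a) := hq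
    have h1 : p₁ (E q) = 0 := by rw [hq']; rfl
    refine ⟨ρ q, ?_⟩
    show p₂ (E ((ρ q : Q))) = a
    rw [hρ, h1, map_zero, map_sub, map_sub, hq']
    simp [p₂]
  -- f is an essential epi
  have hfess : ∀ (X : ModuleCat.{u} R) (g : X →ₗ[R] ModuleCat.of R K),
      Function.Surjective (f ∘ₗ (g : X →ₗ[R] K)) → Function.Surjective g := by
    intro X g₁ hfg
    let g : X →ₗ[R] K := g₁
    show Function.Surjective g
    replace hfg : Function.Surjective (f ∘ₗ g) := hfg
    -- build g' : X × F → Q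
    let g' : (X × F) →ₗ[R] Q :=
      (K.subtype ∘ₗ g ∘ₗ LinearMap.fst R X F) + (s ∘ₗ LinearMap.snd R X F)
    have hEg' : Function.Surjective (E ∘ₗ g') := by
      intro ⟨u, a⟩
      obtain ⟨x, hx⟩ := hfg (a - p₂ (E (s u)))
      refine ⟨(x, u), ?_⟩
      show E ((g x : Q) + s u) = (u, a)
      rw [map_add, hs']
      have h1 : p₁ (E (g x : Q)) = 0 := (g x).2
      have h2 : p₂ (E (g x : Q)) = a - p₂ (E (s u)) := hx
      have : E (g x : Q) = (p₁ (E (g x : Q)), p₂ (E (g x : Q))) := rfl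
      rw [this, h1, h2]
      ext <;> simp [hs', p₁, p₂]
    have := hess (ModuleCat.of R (X × F)) (ModuleCat.ofHom g') hEg'
    intro n
    obtain ⟨⟨x, y⟩, hxy⟩ := this (n : Q)
    have hxy' : (g x : Q) + s y = (n : Q) := hxy
    -- apply p₁ ∘ E
    have h0 : p₁ (E ((g x : Q) + s y)) = p₁ (E (n : Q)) := by rw [hxy']
    rw [map_add, map_add, hs'] at h0
    have h1 : p₁ (E (g x : Q)) = 0 := (g x).2
    have h2 : p₁ (E (n : Q)) = 0 := n.2
    rw [h1, h2] at h0
    have hy : y = 0 := by simpa [p₁] using h0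
    refine ⟨x, ?_⟩
    apply Subtype.ext
    rw [← hxy', hy, map_zero, add_zero]
  -- t : F → K lifting π through f, surjective
  obtain ⟨t, ht⟩ := Module.projective_lifting_property f π hfsurj
  have htsurj : Function.Surjective t := by
    apply hfess (ModuleCat.of R F) t
    show Function.Surjective (f ∘ₗ t)
    rw [ht]; exact hπ
  -- K is projective: use quasi-projectivity of Q to split t
  have hKproj : Module.Projective R K := by
    let g₀ : Q →ₗ[R] K × K := LinearMap.prod (t ∘ₗ p₁ ∘ₗ E) ρ
    have hg₀surj : Function.Surjective g₀ := by
      intro ⟨n₁, n₂⟩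
      obtain ⟨x, hx⟩ := htsurj n₁
      refine ⟨s x + (n₂ : Q), ?_⟩
      have hEsx : p₁ (E (s x + (n₂ : Q))) = x := by
        rw [map_add, map_add, hs']
        have h0 : p₁ (E (n₂ : Q)) = 0 := n₂.2
        rw [h0]; simp [p₁]
      have hρv : ρ (s x + (n₂ : Q)) = n₂ := by
        apply Subtype.ext
        rw [hρ, hEsx]; exact add_sub_cancel_left _ _
      show (t (p₁ (E (s x + (n₂ : Q)))), ρ (s x + (n₂ : Q))) = (n₁, n₂)
      rw [hEsx, hρv, hx]
    let φ : Q →ₗ[R] K × K := LinearMap.prod ρ 0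
    obtain ⟨h₀, hh₀⟩ := hQqp (ModuleCat.of R (K × K)) (ModuleCat.ofHom g₀) hg₀surj (ModuleCat.ofHom φ)
    let H₀ : Q →ₗ[R] Q := h₀.hom
    replace hh₀ : g₀ ∘ₗ H₀ = φ := congrArg ModuleCat.Hom.hom hh₀
    have hh₀' : ∀ q : Q, g₀ (H₀ q) = φ q := fun q => DFunLike.congr_fun hh₀ q
    let σ : K →ₗ[R] F := (p₁ ∘ₗ E ∘ₗ H₀) ∘ₗ K.subtype
    have hsplit : t ∘ₗ σ = LinearMap.id := by
      apply LinearMap.ext; intro n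
      have := hh₀' (n : Q)
      have h1 : t (p₁ (E (H₀ (n : Q)))) = ρ (n : Q) :=
        congrArg Prod.fst this
      show t (σ n) = n
      rw [show σ n = p₁ (E (H₀ (n : Q))) from rfl, h1, hρK]
    exact Module.Projective.of_split σ t hsplit
  exact ⟨ModuleCat.of R K, ModuleCat.ofHom f, hKproj, hfsurj, fun X g hg => hfess X g.hom hg⟩
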